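/- Let G be a compact topological group equipped with its Haar probability measure, and let μ be the product of the Haar measure on G and Lebesgue measure on ℝ^d. Let n ∈ ℕ and for t > 0 set w_t(Y) = t^{n/2} η(tY). Let s, s' > 0 and let f, f' : G × ℝ^d → ℂ be measurable with ∫ |f(x,Y)|² w_s(Y) dμ < ∞ and ∫ |f'(x,Y)|² w_{s'}(Y) dμ < ∞. Then the function (x,Y) ↦ conj(f(x,Y)) · f'(x,Y) · w_{(s+s')/2}(Y) is μ-integrable. (This is the well-definedness of the prequantum BKS pairing (11)–(12): the pairing integral converges absolutely for sections σ_s = f√Ω_s, σ'_{s'} = f'√Ω_{s'} of finite prequantum norm, since |Ω_t| = w_t and √(\bar Ω_s ∧ Ω_{s'}/(bε)) = w_{(s+s')/2}.) -/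

import Mathlib

open scoped Real BigOperators
open MeasureTheory

/-- `sinhc x = sinh x / x` for `x ≠ 0`, and `sinhc 0 = 1`. -/
noncomputable def sinhc (x : ℝ) : ℝ := if x = 0 then 1 else Real.sinh x / x

/-- The function `η(Y) = ∏_{i ∈ I} sinhc (α_i Y)` (equation (5) of the paper). -/
noncomputable def eta {d : ℕ} {I : Type*} [Fintype I]
    (α : I → (EuclideanSpace ℝ (Fin d) →ₗ[ℝ] ℝ)) (Y : EuclideanSpace ℝ (Fin d)) : ℝ :=
  ∏ i, sinhc (α i Y)

/-- The weight `w_t(Y) = t^{n/2} η(tY)`, i.e. `|Ω_t|`. -/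
noncomputable def w {d : ℕ} {I : Type*} [Fintype I]
    (α : I → (EuclideanSpace ℝ (Fin d) →ₗ[ℝ] ℝ)) (n : ℕ) (t : ℝ)
    (Y : EuclideanSpace ℝ (Fin d)) : ℝ :=
  t ^ ((n : ℝ) / 2) * eta α (t • Y)

section Aux

open Set

lemma sinhc_of_ne (x : ℝ) (h : x ≠ 0) : sinhc x = Real.sinh x / x := if_neg h

lemma sinhc_pos (x : ℝ) : 0 < sinhc x := by
  rcases lt_trichotomy x 0 with h | h | h
  · rw [sinhc_of_ne x h.ne]
    exact div_pos_of_neg_of_neg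
      (by simpa [Real.sinh_neg] using Real.sinh_pos_iff.mpr (by linarith : (0:ℝ) < -x)) h
  · simp [h, sinhc]
  · rw [sinhc_of_ne x h.ne']
    exact div_pos (Real.sinh_pos_iff.mpr h) h

lemma sinhc_neg_eq (x : ℝ) : sinhc (-x) = sinhc x := by
  rcases eq_or_ne x 0 with h | h
  · simp [h]
  · rw [sinhc_of_ne _ (neg_ne_zero.mpr h), sinhc_of_ne _ h, Real.sinh_neg, neg_div_neg_eq]

lemma measurable_sinhc : Measurable sinhc := by
  unfold sinhc
  exact Measurable.ite (by simpa using MeasurableSet.singleton (0:ℝ)) measurable_const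
    (Real.continuous_sinh.measurable.div measurable_id)

lemma logsinhc_convex :
    ConvexOn ℝ (Ioi (0:ℝ)) (fun x => Real.log (Real.sinh x) - Real.log x) := by
  have hint : interior (Ioi (0:ℝ)) = Ioi 0 := interior_Ioi
  refine convexOn_of_hasDerivWithinAt2_nonneg (convex_Ioi 0) ?_
    (f' := fun x => Real.cosh x / Real.sinh x - x⁻¹)
    (f'' := fun x => (Real.sinh x * Real.sinh x - Real.cosh x * Real.cosh x) / Real.sinh x ^ 2
      - -(x ^ 2)⁻¹) ?_ ?_ ?_
  · refine ContinuousOn.sub ?_ ?_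
    · exact (Real.continuous_sinh.continuousOn).log
        (fun x hx => (Real.sinh_pos_iff.mpr hx).ne')
    · exact Real.continuousOn_log.mono (fun x hx => ne_of_gt hx)
  · rw [hint]
    intro x hx
    have hx0 : (0:ℝ) < x := hx
    have h1 : HasDerivAt (fun x => Real.log (Real.sinh x)) (Real.cosh x / Real.sinh x) x := by
      simpa using (Real.hasDerivAt_sinh x).log (Real.sinh_pos_iff.mpr hx0).ne'
    have h2 : HasDerivAt Real.log x⁻¹ x := Real.hasDerivAt_log hx0.ne'
    exact ((h1.sub h2)).hasDerivWithinAt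
  · rw [hint]
    intro x hx
    have hx0 : (0:ℝ) < x := hx
    have h1 : HasDerivAt (fun x => Real.cosh x / Real.sinh x)
        ((Real.sinh x * Real.sinh x - Real.cosh x * Real.cosh x) / Real.sinh x ^ 2) x :=
      (Real.hasDerivAt_cosh x).div (Real.hasDerivAt_sinh x) (Real.sinh_pos_iff.mpr hx0).ne'
    have h2 : HasDerivAt (fun x : ℝ => x⁻¹) (-(x ^ 2)⁻¹) x := hasDerivAt_inv hx0.ne'
    exact (h1.sub h2).hasDerivWithinAt
  · rw [hint]
    intro x hx
    have hx0 : (0:ℝ) < x := hx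
    have hsl : x < Real.sinh x := Real.self_lt_sinh_iff.mpr hx0
    have hc : Real.cosh x ^ 2 - Real.sinh x ^ 2 = 1 := Real.cosh_sq_sub_sinh_sq x
    have hsp : 0 < Real.sinh x := Real.sinh_pos_iff.mpr hx0
    have h1 : (Real.sinh x * Real.sinh x - Real.cosh x * Real.cosh x) / Real.sinh x ^ 2
        = -(Real.sinh x ^ 2)⁻¹ := by
      field_simp
      nlinarith
    show (0:ℝ) ≤ _ - _
    rw [h1]
    have : (Real.sinh x ^ 2)⁻¹ ≤ (x ^ 2)⁻¹ := by
      apply inv_anti₀ (by positivity) (by nlinarith)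
    linarith

lemma sinhc_sq_midpoint {x y : ℝ} (hx : 0 < x) (hy : 0 < y) :
    sinhc ((x + y) / 2) ^ 2 ≤ sinhc x * sinhc y := by
  have hm : 0 < (x + y) / 2 := by linarith
  have hexp : ∀ t : ℝ, 0 < t → sinhc t = Real.exp (Real.log (Real.sinh t) - Real.log t) := by
    intro t ht
    rw [Real.exp_sub, Real.exp_log (Real.sinh_pos_iff.mpr ht), Real.exp_log ht,
      sinhc_of_ne t ht.ne']
  have hc := logsinhc_convex.2 (mem_Ioi.mpr hx) (mem_Ioi.mpr hy)
    (by norm_num : (0:ℝ) ≤ 1/2) (by norm_num : (0:ℝ) ≤ 1/2) (by norm_num)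
  simp only [smul_eq_mul] at hc
  have hmid : (1/2 : ℝ) * x + (1/2 : ℝ) * y = (x + y) / 2 := by ring
  rw [hmid] at hc
  rw [hexp _ hm, hexp _ hx, hexp _ hy, ← Real.exp_add, sq, ← Real.exp_add]
  exact Real.exp_le_exp.mpr (by linarith)

lemma sinhc_sq_mid' {s s' : ℝ} (hs : 0 < s) (hs' : 0 < s') (a : ℝ) :
    sinhc ((s + s') / 2 * a) ^ 2 ≤ sinhc (s * a) * sinhc (s' * a) := by
  rcases lt_trichotomy a 0 with h | h | h
  · have key := sinhc_sq_midpoint (mul_pos hs (neg_pos.mpr h)) (mul_pos hs' (neg_pos.mpr h))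
    have e1 : (s * -a + s' * -a) / 2 = -((s + s') / 2 * a) := by ring
    rw [e1, sinhc_neg_eq, show s * -a = -(s * a) by ring, show s' * -a = -(s' * a) by ring,
      sinhc_neg_eq, sinhc_neg_eq] at key
    exact key
  · simp [h, sinhc]
  · have key := sinhc_sq_midpoint (mul_pos hs h) (mul_pos hs' h)
    have e1 : (s * a + s' * a) / 2 = (s + s') / 2 * a := by ring
    rwa [e1] at key

lemma eta_nonneg {d : ℕ} {I : Type*} [Fintype I]
    (α : I → (EuclideanSpace ℝ (Fin d) →ₗ[ℝ] ℝ)) (Y : EuclideanSpace ℝ (Fin d)) :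
    0 ≤ eta α Y :=
  Finset.prod_nonneg fun i _ => (sinhc_pos _).le

lemma eta_sq_le {d : ℕ} {I : Type*} [Fintype I]
    (α : I → (EuclideanSpace ℝ (Fin d) →ₗ[ℝ] ℝ)) {s s' : ℝ} (hs : 0 < s) (hs' : 0 < s')
    (Y : EuclideanSpace ℝ (Fin d)) :
    eta α (((s + s') / 2) • Y) ^ 2 ≤ eta α (s • Y) * eta α (s' • Y) := by
  unfold eta
  rw [← Finset.prod_mul_distrib, ← Finset.prod_pow]
  refine Finset.prod_le_prod (fun i _ => sq_nonneg _) (fun i _ => ?_)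
  simpa [_root_.map_smul, smul_eq_mul] using sinhc_sq_mid' hs hs' (α i Y)

lemma measurable_eta_smul {d : ℕ} {I : Type*} [Fintype I]
    (α : I → (EuclideanSpace ℝ (Fin d) →ₗ[ℝ] ℝ)) (t : ℝ) :
    Measurable (fun Y : EuclideanSpace ℝ (Fin d) => eta α (t • Y)) := by
  unfold eta
  refine Finset.measurable_prod _ (fun i _ => ?_)
  exact measurable_sinhc.comp
    ((LinearMap.continuous_of_finiteDimensional (α i)).measurable.comp
      (measurable_id.const_smul t))

end Aux

/-- Well-definedness of the prequantum BKS pairing (11)–(12): for sections of finite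
prequantum norm the pairing integral converges absolutely. -/
theorem statement_7 {d : ℕ} (hd : 1 ≤ d) {I : Type*} [Fintype I]
    (α : I → (EuclideanSpace ℝ (Fin d) →ₗ[ℝ] ℝ)) (n : ℕ)
    {G : Type*} [Group G] [TopologicalSpace G] [IsTopologicalGroup G] [CompactSpace G]
    [MeasurableSpace G] [BorelSpace G]
    (μG : Measure G) [μG.IsHaarMeasure] [IsProbabilityMeasure μG]
    {s s' : ℝ} (hs : 0 < s) (hs' : 0 < s')
    (f f' : G × EuclideanSpace ℝ (Fin d) → ℂ)
    (hfm : Measurable f) (hf'm : Measurable f')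
    (hf : Integrable (fun p => ‖f p‖ ^ 2 * w α n s p.2) (μG.prod volume))
    (hf' : Integrable (fun p => ‖f' p‖ ^ 2 * w α n s' p.2) (μG.prod volume)) :
    Integrable
      (fun p => (starRingEnd ℂ) (f p) * f' p * ((w α n ((s + s') / 2) p.2 : ℝ) : ℂ))
      (μG.prod volume) := by
  set m : ℝ := (s + s') / 2 with hm_def
  have hm : 0 < m := by simp only [hm_def]; linarith
  set C : ℝ := m ^ ((n : ℝ) / 2) /
      (Real.sqrt (s ^ ((n : ℝ) / 2)) * Real.sqrt (s' ^ ((n : ℝ) / 2))) with hC_def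
  have hCpos : 0 < C := by
    apply div_pos (Real.rpow_pos_of_pos hm _)
    exact mul_pos (Real.sqrt_pos.mpr (Real.rpow_pos_of_pos hs _))
      (Real.sqrt_pos.mpr (Real.rpow_pos_of_pos hs' _))
  -- key pointwise bound for the weights
  have hw_nonneg : ∀ (t : ℝ), 0 < t → ∀ Y, 0 ≤ w α n t Y := fun t ht Y =>
    mul_nonneg (Real.rpow_nonneg ht.le _) (eta_nonneg α _)
  have hkey : ∀ Y : EuclideanSpace ℝ (Fin d),
      w α n m Y ≤ C * (Real.sqrt (w α n s Y) * Real.sqrt (w α n s' Y)) := by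
    intro Y
    have hsqrt_ws : Real.sqrt (w α n s Y)
        = Real.sqrt (s ^ ((n : ℝ) / 2)) * Real.sqrt (eta α (s • Y)) :=
      Real.sqrt_mul (Real.rpow_nonneg hs.le _) _
    have hsqrt_ws' : Real.sqrt (w α n s' Y)
        = Real.sqrt (s' ^ ((n : ℝ) / 2)) * Real.sqrt (eta α (s' • Y)) :=
      Real.sqrt_mul (Real.rpow_nonneg hs'.le _) _
    have heta : eta α (m • Y) ≤ Real.sqrt (eta α (s • Y)) * Real.sqrt (eta α (s' • Y)) := by
      rw [← Real.sqrt_mul (eta_nonneg α _)]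
      calc eta α (m • Y) = Real.sqrt (eta α (m • Y) ^ 2) := (Real.sqrt_sq (eta_nonneg α _)).symm
        _ ≤ Real.sqrt (eta α (s • Y) * eta α (s' • Y)) :=
            Real.sqrt_le_sqrt (eta_sq_le α hs hs' Y)
    have hCs : C * (Real.sqrt (s ^ ((n : ℝ) / 2)) * Real.sqrt (s' ^ ((n : ℝ) / 2)))
        = m ^ ((n : ℝ) / 2) := by
      rw [hC_def]
      field_simp
    calc w α n m Y = m ^ ((n : ℝ) / 2) * eta α (m • Y) := rfl
      _ ≤ m ^ ((n : ℝ) / 2) * (Real.sqrt (eta α (s • Y)) * Real.sqrt (eta α (s' • Y))) := by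
          exact mul_le_mul_of_nonneg_left heta (Real.rpow_nonneg hm.le _)
      _ = C * (Real.sqrt (w α n s Y) * Real.sqrt (w α n s' Y)) := by
          rw [hsqrt_ws, hsqrt_ws', ← hCs]; ring
  -- measurability of the integrand
  have hwm_meas : Measurable (fun Y : EuclideanSpace ℝ (Fin d) => w α n m Y) :=
    (measurable_eta_smul α m).const_mul _
  have hmeas : AEStronglyMeasurable
      (fun p : G × EuclideanSpace ℝ (Fin d) =>
        (starRingEnd ℂ) (f p) * f' p * ((w α n m p.2 : ℝ) : ℂ)) (μG.prod volume) := by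
    refine Measurable.aestronglyMeasurable ?_
    exact ((Complex.continuous_conj.measurable.comp hfm).mul hf'm).mul
      (Complex.measurable_ofReal.comp (hwm_meas.comp measurable_snd))
  -- dominating function
  refine Integrable.mono'
    (((hf.const_mul (C / 2)).add (hf'.const_mul (C / 2)))) hmeas
    (Filter.Eventually.of_forall fun p => ?_)
  have hA : (0:ℝ) ≤ ‖f p‖ := norm_nonneg _
  have hB : (0:ℝ) ≤ ‖f' p‖ := norm_nonneg _
  have hwm0 : 0 ≤ w α n m p.2 := hw_nonneg m hm p.2
  have hnorm : ‖(starRingEnd ℂ) (f p) * f' p * ((w α n m p.2 : ℝ) : ℂ)‖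
      = ‖f p‖ * ‖f' p‖ * w α n m p.2 := by
    rw [norm_mul, norm_mul, Complex.norm_real, Real.norm_of_nonneg hwm0,
      RingHomIsometric.norm_map]
  rw [hnorm]
  set A := ‖f p‖
  set B := ‖f' p‖
  set u := A * Real.sqrt (w α n s p.2) with hu_def
  set v := B * Real.sqrt (w α n s' p.2) with hv_def
  have hu2 : u ^ 2 = A ^ 2 * w α n s p.2 := by
    rw [hu_def, mul_pow, Real.sq_sqrt (hw_nonneg s hs p.2)]
  have hv2 : v ^ 2 = B ^ 2 * w α n s' p.2 := by
    rw [hv_def, mul_pow, Real.sq_sqrt (hw_nonneg s' hs' p.2)]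
  have h1 : A * B * w α n m p.2 ≤ C * (u * v) := by
    have := mul_le_mul_of_nonneg_left (hkey p.2) (mul_nonneg hA hB)
    calc A * B * w α n m p.2
        ≤ A * B * (C * (Real.sqrt (w α n s p.2) * Real.sqrt (w α n s' p.2))) := this
      _ = C * (u * v) := by rw [hu_def, hv_def]; ring
  have h2 : 2 * (u * v) ≤ u ^ 2 + v ^ 2 := by nlinarith [two_mul_le_add_sq u v]
  have h3 : C * (u * v) ≤ C / 2 * (u ^ 2 + v ^ 2) := by nlinarith
  calc A * B * w α n m p.2 ≤ C / 2 * (u ^ 2 + v ^ 2) := le_trans h1 h3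
    _ = C / 2 * (A ^ 2 * w α n s p.2) + C / 2 * (B ^ 2 * w α n s' p.2) := by
        rw [hu2, hv2]; ring
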